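/- Let a_1, ..., a_K and b_1, ..., b_L be positive integers with Σ a_k = Σ b_l, and let f(x) = Σ_{k=1}^K floor(a_k x) - Σ_{l=1}^L floor(b_l x). Then for any integer n, there exists x with f(x) = -n if and only if there exists x' with f(x') = L - K + n. -/

import Mathlib

private lemma irr_ceil_eq (r : ℝ) (hr : Irrational r) : ⌈r⌉ = ⌊r⌋ + 1 := by
  have h1 : ⌈r⌉ ≤ ⌊r⌋ + 1 := Int.ceil_le_floor_add_one r
  have h2 : (⌊r⌋ : ℝ) < r := by
    rcases lt_or_eq_of_le (Int.floor_le r) with h | h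
    · exact h
    · exact absurd h.symm (hr.ne_int ⌊r⌋)
  have h3 : ⌊r⌋ < ⌈r⌉ := Int.lt_ceil.mpr h2
  omega

private lemma key (K L : ℕ) (a : Fin K → ℕ) (b : Fin L → ℕ)
    (ha : ∀ k, 0 < a k) (hb : ∀ l, 0 < b l) (m : ℤ) (x : ℝ)
    (hx : (∑ k, ⌊(a k : ℝ) * x⌋) - (∑ l, ⌊(b l : ℝ) * x⌋) = m) :
    ∃ x' : ℝ, (∑ k, ⌊(a k : ℝ) * x'⌋) - (∑ l, ⌊(b l : ℝ) * x'⌋) = (L : ℤ) - K - m := by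
  -- choose ε > 0 such that floors don't change on [x, x+ε)
  set c : Fin K ⊕ Fin L → ℕ := Sum.elim a b with hc
  have hcpos : ∀ i, 0 < c i := by rintro (k | l); exacts [ha k, hb l]
  set δ : Fin K ⊕ Fin L → ℝ := fun i => ((⌊(c i : ℝ) * x⌋ + 1 : ℝ) - (c i : ℝ) * x) / (c i) with hδ
  have hδpos : ∀ i, 0 < δ i := by
    intro i
    apply div_pos
    · have := Int.lt_floor_add_one ((c i : ℝ) * x)
      push_cast
      linarith
    · exact_mod_cast hcpos i
  set s : Finset ℝ := insert 1 (Finset.univ.image δ) with hs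
  have hsne : s.Nonempty := ⟨1, Finset.mem_insert_self _ _⟩
  set ε : ℝ := s.min' hsne with hε
  have hεpos : 0 < ε := by
    rw [hε, Finset.lt_min'_iff]
    intro y hy
    rw [hs] at hy
    rcases Finset.mem_insert.mp hy with h | h
    · simp [h]
    · obtain ⟨i, _, hi⟩ := Finset.mem_image.mp h
      rw [← hi]; exact hδpos i
  obtain ⟨t, ht_irr, ht_lt, ht_lt'⟩ := exists_irrational_btwn (show x < x + ε by linarith)
  -- floors agree at t
  have hfloor : ∀ i, ⌊(c i : ℝ) * t⌋ = ⌊(c i : ℝ) * x⌋ := by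
    intro i
    have hci : (0 : ℝ) < c i := by exact_mod_cast hcpos i
    have hδi : δ i ∈ s := Finset.mem_insert_of_mem (Finset.mem_image_of_mem δ (Finset.mem_univ i))
    have hεδ : ε ≤ δ i := Finset.min'_le s _ hδi
    have h1 : (c i : ℝ) * x ≤ (c i : ℝ) * t := by nlinarith
    have h2 : (c i : ℝ) * t < (⌊(c i : ℝ) * x⌋ : ℝ) + 1 := by
      have : (c i : ℝ) * t < (c i : ℝ) * (x + δ i) := by
        apply mul_lt_mul_of_pos_left _ hci
        linarith
      have heq : (c i : ℝ) * (x + δ i) = (⌊(c i : ℝ) * x⌋ : ℝ) + 1 := by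
        rw [hδ]
        field_simp
        ring
      linarith
    have := Int.floor_le ((c i : ℝ) * x)
    rw [Int.floor_eq_iff]
    constructor
    · linarith
    · exact h2
  have hirr : ∀ i, Irrational ((c i : ℝ) * t) := fun i =>
    Irrational.natCast_mul ht_irr (hcpos i).ne'
  -- floor at -t
  have hneg : ∀ i, ⌊(c i : ℝ) * (-t)⌋ = -⌊(c i : ℝ) * x⌋ - 1 := by
    intro i
    have : (c i : ℝ) * (-t) = -((c i : ℝ) * t) := by ring
    rw [this, Int.floor_neg, irr_ceil_eq _ (hirr i), hfloor i]
    ring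
  refine ⟨-t, ?_⟩
  have hA : ∀ k, ⌊(a k : ℝ) * (-t)⌋ = -⌊(a k : ℝ) * x⌋ - 1 := fun k => hneg (Sum.inl k)
  have hB : ∀ l, ⌊(b l : ℝ) * (-t)⌋ = -⌊(b l : ℝ) * x⌋ - 1 := fun l => hneg (Sum.inr l)
  simp only [hA, hB, Finset.sum_sub_distrib, Finset.sum_neg_distrib]
  simp [Finset.sum_sub_distrib]
  omega

theorem stmt_7 (K L : ℕ) (a : Fin K → ℕ) (b : Fin L → ℕ)
    (ha : ∀ k, 0 < a k) (hb : ∀ l, 0 < b l)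
    (hsum : (∑ k, a k) = (∑ l, b l)) (n : ℤ) :
    (∃ x : ℝ, (∑ k, ⌊(a k : ℝ) * x⌋) - (∑ l, ⌊(b l : ℝ) * x⌋) = -n) ↔
    (∃ x' : ℝ, (∑ k, ⌊(a k : ℝ) * x'⌋) - (∑ l, ⌊(b l : ℝ) * x'⌋) = (L : ℤ) - K + n) := by
  constructor
  · rintro ⟨x, hx⟩
    obtain ⟨x', hx'⟩ := key K L a b ha hb (-n) x hx
    exact ⟨x', by linarith⟩
  · rintro ⟨x, hx⟩
    obtain ⟨x', hx'⟩ := key K L a b ha hb ((L : ℤ) - K + n) x hx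
    exact ⟨x', by linarith⟩
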